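/- Let b be the barycenter of T₀. For every n ≥ 1: (i) the number of triangles t ∈ Bⁿ(T₀) having b as a vertex equals 3·2ⁿ; (ii) the number of triangles t ∈ Bⁿ(T₀) whose intersection with ∂T₀ consists of exactly one point equals 3(n−1)·2ⁿ; consequently, the total number of triangles in Bⁿ(T₀) that either have a side contained in ∂T₀ or meet ∂T₀ in exactly one point equals 3n·2ⁿ. -/

import Mathlib

/-- A point of the plane. -/
abbrev Pt := ℝ × ℝ

/-- A triangle in the plane: an ordered triple of points. -/
structure Triangle where
  v : Fin 3 → Pt

/-- A triangle is nondegenerate if its vertices are affinely independent. -/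
def Triangle.Nondeg (T : Triangle) : Prop := AffineIndependent ℝ T.v

/-- The barycenter of a triangle. -/
noncomputable def Triangle.bary (T : Triangle) : Pt :=
  (3 : ℝ)⁻¹ • (T.v 0 + T.v 1 + T.v 2)

/-- The child `[aᵢ, (aᵢ+aⱼ)/2, b]` of a triangle produced by barycentric subdivision. -/
noncomputable def Triangle.child (T : Triangle) (i j : Fin 3) : Triangle :=
  ⟨![T.v i, (2 : ℝ)⁻¹ • (T.v i + T.v j), T.bary]⟩

/-- The barycentric subdivision of a triangle: the set of its six children. -/
noncomputable def BSub (T : Triangle) : Set Triangle :=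
  {t | ∃ i j : Fin 3, i ≠ j ∧ t = T.child i j}

/-- `n`-fold iterated barycentric subdivision `Bⁿ(T₀)`. -/
noncomputable def BIter (T₀ : Triangle) : ℕ → Set Triangle
  | 0 => {T₀}
  | n + 1 => ⋃ t ∈ BIter T₀ n, BSub t

/-- The set of sides of a triangle (as subsets of the plane). -/
def Triangle.sides (T : Triangle) : Set (Set Pt) :=
  {e | ∃ i j : Fin 3, i ≠ j ∧ e = segment ℝ (T.v i) (T.v j)}

/-- The boundary of a triangle: the union of its three sides. -/
def Triangle.bdry (T : Triangle) : Set Pt :=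
  segment ℝ (T.v 0) (T.v 1) ∪ segment ℝ (T.v 1) (T.v 2) ∪ segment ℝ (T.v 0) (T.v 2)

/-- Two triangles are adjacent if they are distinct and share a common side. -/
def Adjacent (s t : Triangle) : Prop := s ≠ t ∧ ∃ e, e ∈ s.sides ∧ e ∈ t.sides

/-- The convex hull of a triangle (the triangle viewed as a subset of the plane). -/
def Triangle.hull (T : Triangle) : Set Pt := convexHull ℝ {T.v 0, T.v 1, T.v 2}

-- helpers
lemma sum3 {M : Type*} [AddCommMonoid M] (f : Fin 3 → M) (i j k : Fin 3)
    (hij : i ≠ j) (hik : i ≠ k) (hjk : j ≠ k) :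
    ∑ l, f l = f i + f j + f k := by
  fin_cases i <;> fin_cases j <;> fin_cases k <;>
    simp_all [Fin.sum_univ_three] <;> abel

lemma uniq0 {t : Triangle} (ht : t.Nondeg) (i j k : Fin 3)
    (hij : i ≠ j) (hik : i ≠ k) (hjk : j ≠ k) {a b c : ℝ}
    (hsum : a + b + c = 0) (hcomb : a • t.v i + b • t.v j + c • t.v k = 0) :
    a = 0 ∧ b = 0 ∧ c = 0 := by
  rw [Triangle.Nondeg, affineIndependent_iff] at ht
  set w : Fin 3 → ℝ := fun l => if l = i then a else if l = j then b else c with hw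
  have hwi : w i = a := by simp [hw]
  have hwj : w j = b := by simp [hw, hij.symm]
  have hwk : w k = c := by simp [hw, hik.symm, hjk.symm]
  have hs : (Finset.univ : Finset (Fin 3)).sum w = 0 := by
    rw [show (Finset.univ : Finset (Fin 3)).sum w = ∑ l, w l from rfl,
      sum3 w i j k hij hik hjk, hwi, hwj, hwk]; exact hsum
  have hc : ∑ e, w e • t.v e = 0 := by
    rw [sum3 (fun l => w l • t.v l) i j k hij hik hjk, hwi, hwj, hwk]; exact hcomb
  have := ht Finset.univ w hs hc
  exact ⟨hwi ▸ this i (Finset.mem_univ i), hwj ▸ this j (Finset.mem_univ j),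
    hwk ▸ this k (Finset.mem_univ k)⟩

lemma uniq {t : Triangle} (ht : t.Nondeg) (i j k : Fin 3)
    (hij : i ≠ j) (hik : i ≠ k) (hjk : j ≠ k) {a b c a' b' c' : ℝ}
    (hsum : a + b + c = a' + b' + c')
    (h : a • t.v i + b • t.v j + c • t.v k = a' • t.v i + b' • t.v j + c' • t.v k) :
    a = a' ∧ b = b' ∧ c = c' := by
  have h0 : (a - a') • t.v i + (b - b') • t.v j + (c - c') • t.v k = 0 := by
    simp only [sub_smul]; rw [← sub_eq_zero] at h; rw [← h]; abel
  have := uniq0 ht i j k hij hik hjk (by linarith) h0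
  refine ⟨by linarith [this.1], by linarith [this.2.1], by linarith [this.2.2]⟩

lemma mem_hull_iff (t : Triangle) (x : Pt) :
    x ∈ t.hull ↔ ∃ a b c : ℝ, 0 ≤ a ∧ 0 ≤ b ∧ 0 ≤ c ∧ a + b + c = 1 ∧
      x = a • t.v 0 + b • t.v 1 + c • t.v 2 := by
  rw [Triangle.hull, show ({t.v 0, t.v 1, t.v 2} : Set Pt) = insert (t.v 0) {t.v 1, t.v 2} from rfl,
    convexHull_insert ⟨t.v 1, by simp⟩, convexHull_pair]
  constructor
  · rw [mem_convexJoin]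
    rintro ⟨y, hy, z, ⟨r, s, hr, hs, hrs, rfl⟩, ⟨p, q, hp, hq, hpq, rfl⟩⟩
    rw [Set.mem_singleton_iff] at hy; subst hy
    exact ⟨p, q * r, q * s, hp, mul_nonneg hq hr, mul_nonneg hq hs,
      by nlinarith, by simp [smul_add, mul_smul]; module⟩
  · rintro ⟨a, b, c, ha, hb, hc, habc, rfl⟩
    rw [mem_convexJoin]
    rcases eq_or_lt_of_le (add_nonneg hb hc) with h0 | h0
    · have hb0 : b = 0 := by linarith
      have hc0 : c = 0 := by linarith
      refine ⟨t.v 0, rfl, t.v 1, left_mem_segment ℝ _ _, a, 0, ha, le_refl _, by linarith, ?_⟩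
      simp [hb0, hc0]
    · refine ⟨t.v 0, rfl, (b / (b + c)) • t.v 1 + (c / (b + c)) • t.v 2,
        ⟨b / (b + c), c / (b + c), by positivity, by positivity, by field_simp, rfl⟩,
        a, b + c, ha, le_of_lt h0, by linarith, ?_⟩
      have e1 : (b + c) * (b / (b + c)) = b := by field_simp
      have e2 : (b + c) * (c / (b + c)) = c := by field_simp
      rw [smul_add, smul_smul, smul_smul, e1, e2, add_assoc]

def openHull (t : Triangle) : Set Pt :=
  {x | ∃ w : Fin 3 → ℝ, (∀ l, 0 < w l) ∧ ∑ l, w l = 1 ∧ x = ∑ l, w l • t.v l}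

lemma bary_mem_openHull (t : Triangle) : t.bary ∈ openHull t := by
  refine ⟨fun _ => 3⁻¹, fun l => by norm_num, ?_, ?_⟩
  · rw [Fin.sum_univ_three]; norm_num
  · rw [Fin.sum_univ_three, Triangle.bary]; module

-- new material
lemma trich (i j k l : Fin 3) (hij : i ≠ j) (hik : i ≠ k) (hjk : j ≠ k) :
    l = i ∨ l = j ∨ l = k := by revert i j k l; decide

@[simp] lemma child_v0 (t : Triangle) (i j : Fin 3) : (t.child i j).v 0 = t.v i := rfl
@[simp] lemma child_v1 (t : Triangle) (i j : Fin 3) :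
    (t.child i j).v 1 = (2 : ℝ)⁻¹ • (t.v i + t.v j) := rfl
@[simp] lemma child_v2 (t : Triangle) (i j : Fin 3) : (t.child i j).v 2 = t.bary := rfl

lemma comb_child (t : Triangle) (i j k : Fin 3)
    (hsum : t.v i + t.v j + t.v k = t.v 0 + t.v 1 + t.v 2) (a b c : ℝ) :
    a • t.v i + b • ((2 : ℝ)⁻¹ • (t.v i + t.v j)) + c • t.bary
      = (a + b / 2 + c / 3) • t.v i + (b / 2 + c / 3) • t.v j + (c / 3) • t.v k := by
  rw [Triangle.bary, ← hsum]
  module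

lemma child_hull_mp {t : Triangle} {i j k : Fin 3}
    (hsum : t.v i + t.v j + t.v k = t.v 0 + t.v 1 + t.v 2) {x : Pt}
    (hx : x ∈ (t.child i j).hull) :
    ∃ w1 w2 w3 : ℝ, 0 ≤ w3 ∧ w3 ≤ w2 ∧ w2 ≤ w1 ∧ w1 + w2 + w3 = 1 ∧
      x = w1 • t.v i + w2 • t.v j + w3 • t.v k := by
  rw [mem_hull_iff] at hx
  obtain ⟨a, b, c, ha, hb, hc, habc, rfl⟩ := hx
  simp only [child_v0, child_v1, child_v2]
  exact ⟨a + b / 2 + c / 3, b / 2 + c / 3, c / 3, by linarith, by linarith, by linarith,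
    by linarith, comb_child t i j k hsum a b c⟩

lemma child_hull_mpr {t : Triangle} {i j k : Fin 3}
    (hsum : t.v i + t.v j + t.v k = t.v 0 + t.v 1 + t.v 2) {x : Pt}
    {w1 w2 w3 : ℝ} (h3 : 0 ≤ w3) (h32 : w3 ≤ w2) (h21 : w2 ≤ w1) (hw : w1 + w2 + w3 = 1)
    (hx : x = w1 • t.v i + w2 • t.v j + w3 • t.v k) :
    x ∈ (t.child i j).hull := by
  rw [mem_hull_iff]
  refine ⟨w1 - w2, 2 * (w2 - w3), 3 * w3, by linarith, by linarith, by linarith, by linarith, ?_⟩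
  simp only [child_v0, child_v1, child_v2]
  rw [comb_child t i j k hsum]
  rw [hx]
  congr 1 <;> [skip; ring_nf]
  congr 1 <;> ring_nf

lemma child_open_coords {t : Triangle} {i j k : Fin 3}
    (hij : i ≠ j) (hik : i ≠ k) (hjk : j ≠ k)
    (hsum : t.v i + t.v j + t.v k = t.v 0 + t.v 1 + t.v 2) {x : Pt}
    (hx : x ∈ openHull (t.child i j)) :
    ∃ w : Fin 3 → ℝ, (∑ l, w l = 1) ∧ x = (∑ l, w l • t.v l) ∧
      0 < w k ∧ w k < w j ∧ w j < w i := by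
  obtain ⟨u, hu, husum, rfl⟩ := hx
  rw [Fin.sum_univ_three] at husum ⊢
  simp only [child_v0, child_v1, child_v2]
  rw [comb_child t i j k hsum]
  set a := u 0; set b := u 1; set c := u 2
  have ha := hu 0; have hb := hu 1; have hc := hu 2
  refine ⟨fun l => if l = i then a + b / 2 + c / 3 else if l = j then b / 2 + c / 3 else c / 3,
    ?_, ?_, ?_, ?_, ?_⟩
  · rw [sum3 _ i j k hij hik hjk]
    simp [hij.symm, hik.symm, hjk.symm]
    linarith
  · rw [sum3 _ i j k hij hik hjk]
    simp [hij.symm, hik.symm, hjk.symm]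
  · simp [hik.symm, hjk.symm]; positivity
  · simp [hij.symm, hik.symm, hjk.symm]; linarith
  · simp [hij.symm]; linarith

lemma uniqF {t : Triangle} (ht : t.Nondeg) {w w' : Fin 3 → ℝ}
    (hs : ∑ l, w l = 1) (hs' : ∑ l, w' l = 1)
    (h : ∑ l, w l • t.v l = ∑ l, w' l • t.v l) : ∀ l, w l = w' l := by
  intro l
  have h01 : (0 : Fin 3) ≠ 1 := by decide
  have h02 : (0 : Fin 3) ≠ 2 := by decide
  have h12 : (1 : Fin 3) ≠ 2 := by decide
  simp only [Fin.sum_univ_three] at hs hs' h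
  have := uniq ht 0 1 2 h01 h02 h12 (a := w 0) (b := w 1) (c := w 2)
    (a' := w' 0) (b' := w' 1) (c' := w' 2) (by linarith) h
  have hl := trich 0 1 2 l h01 h02 h12
  rcases hl with rfl | rfl | rfl
  exacts [this.1, this.2.1, this.2.2]

lemma openHull_child_subset {t : Triangle} {i j k : Fin 3}
    (hij : i ≠ j) (hik : i ≠ k) (hjk : j ≠ k)
    (hsum : t.v i + t.v j + t.v k = t.v 0 + t.v 1 + t.v 2) :
    openHull (t.child i j) ⊆ openHull t := by
  intro x hx
  obtain ⟨w, hw1, hwx, hk, hkj, hji⟩ := child_open_coords hij hik hjk hsum hx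
  refine ⟨w, ?_, hw1, hwx⟩
  intro l
  rcases trich i j k l hij hik hjk with rfl | rfl | rfl <;> linarith

lemma sib_disjoint {t : Triangle} (ht : t.Nondeg) {i j k i' j' k' : Fin 3}
    (hij : i ≠ j) (hik : i ≠ k) (hjk : j ≠ k)
    (hij' : i' ≠ j') (hik' : i' ≠ k') (hjk' : j' ≠ k')
    (hsum : t.v i + t.v j + t.v k = t.v 0 + t.v 1 + t.v 2)
    (hsum' : t.v i' + t.v j' + t.v k' = t.v 0 + t.v 1 + t.v 2)
    (hne : i ≠ i' ∨ j ≠ j') :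
    openHull (t.child i j) ∩ openHull (t.child i' j') = ∅ := by
  by_contra h
  obtain ⟨x, hx, hx'⟩ := Set.nonempty_iff_ne_empty.2 h
  obtain ⟨w, hw1, hwx, hk, hkj, hji⟩ := child_open_coords hij hik hjk hsum hx
  obtain ⟨w', hw1', hwx', hk', hkj', hji'⟩ := child_open_coords hij' hik' hjk' hsum' hx'
  have heq : ∀ l, w l = w' l := uniqF ht hw1 hw1' (hwx ▸ hwx' ▸ rfl)
  simp only [← heq i', ← heq j', ← heq k'] at hk' hkj' hji'
  have wlt : ∀ {a b c : Fin 3}, a ≠ b → a ≠ c → b ≠ c →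
      (0 < w c ∧ w c < w b ∧ w b < w a) → ∀ l, l ≠ a → w l < w a := by
    intro a b c hab hac hbc hch l hla
    rcases trich a b c l hab hac hbc with rfl | rfl | rfl
    · exact (hla rfl).elim
    · linarith [hch.2.2]
    · linarith [hch.1, hch.2.1, hch.2.2]
  have ch1 : 0 < w k ∧ w k < w j ∧ w j < w i := ⟨hk, hkj, hji⟩
  have ch2 : 0 < w k' ∧ w k' < w j' ∧ w j' < w i' := ⟨hk', hkj', hji'⟩
  by_cases hii : i = i'
  · subst hii
    have hne' : j ≠ j' := by
      rcases hne with h | h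
      · exact (h rfl).elim
      · exact h
    have hj' : j' = k := by
      rcases trich i j k j' hij hik hjk with h | h | h
      · exact (hij' h.symm).elim
      · exact (hne' h.symm).elim
      · exact h
    have hk'' : k' = j := by
      rcases trich i j k k' hij hik hjk with h | h | h
      · exact (hik' h.symm).elim
      · exact h
      · exact (hjk' (hj'.trans h.symm)).elim
    rw [hj', hk''] at hkj'
    linarith
  · have h1 : w i' < w i := wlt hij hik hjk ch1 i' (fun h => hii h.symm)
    have h2 : w i < w i' := wlt hij' hik' hjk' ch2 i hii
    linarith

lemma child_nondeg {t : Triangle} (ht : t.Nondeg) {i j k : Fin 3}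
    (hij : i ≠ j) (hik : i ≠ k) (hjk : j ≠ k)
    (hsum : t.v i + t.v j + t.v k = t.v 0 + t.v 1 + t.v 2) :
    (t.child i j).Nondeg := by
  rw [Triangle.Nondeg, affineIndependent_iff_of_fintype]
  intro w hw0 hcomb
  rw [Finset.weightedVSub_eq_linear_combination _ hw0] at hcomb
  rw [Fin.sum_univ_three] at hw0 hcomb
  simp only [child_v0, child_v1, child_v2] at hcomb
  rw [comb_child t i j k hsum] at hcomb
  have h0 := uniq0 ht i j k hij hik hjk (a := w 0 + w 1 / 2 + w 2 / 3)
    (b := w 1 / 2 + w 2 / 3) (c := w 2 / 3) (by linarith) hcomb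
  intro l
  rcases trich 0 1 2 l (by decide) (by decide) (by decide) with rfl | rfl | rfl <;>
    [skip; skip; skip] <;>
    · obtain ⟨e1, e2, e3⟩ := h0; linarith

-- chunk 3
lemma vertex_mem_hull (t : Triangle) (l : Fin 3) : t.v l ∈ t.hull := by
  rw [Triangle.hull]
  apply subset_convexHull
  fin_cases l <;> simp

lemma mem_hull_fn {t : Triangle} {x : Pt} {w : Fin 3 → ℝ}
    (h0 : ∀ l, 0 ≤ w l) (h1 : ∑ l, w l = 1) (hx : x = ∑ l, w l • t.v l) :
    x ∈ t.hull := by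
  rw [mem_hull_iff]
  rw [Fin.sum_univ_three] at h1 hx
  exact ⟨w 0, w 1, w 2, h0 0, h0 1, h0 2, h1, hx⟩

lemma mem_hull_of {t : Triangle} {i j k : Fin 3}
    (hij : i ≠ j) (hik : i ≠ k) (hjk : j ≠ k) {x : Pt} {a b c : ℝ}
    (ha : 0 ≤ a) (hb : 0 ≤ b) (hc : 0 ≤ c) (habc : a + b + c = 1)
    (hx : x = a • t.v i + b • t.v j + c • t.v k) : x ∈ t.hull := by
  refine mem_hull_fn (w := fun l => if l = i then a else if l = j then b else c) ?_ ?_ ?_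
  · intro l
    rcases trich i j k l hij hik hjk with rfl | rfl | rfl <;>
      simp [hij.symm, hik.symm, hjk.symm, ha, hb, hc]
  · rw [sum3 _ i j k hij hik hjk]; simp [hij.symm, hik.symm, hjk.symm]; linarith
  · rw [sum3 _ i j k hij hik hjk]; simp [hij.symm, hik.symm, hjk.symm]; exact hx

lemma hull_child_subset {t : Triangle} {i j k : Fin 3}
    (hij : i ≠ j) (hik : i ≠ k) (hjk : j ≠ k)
    (hsum : t.v i + t.v j + t.v k = t.v 0 + t.v 1 + t.v 2) :
    (t.child i j).hull ⊆ t.hull := by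
  intro x hx
  obtain ⟨w1, w2, w3, h3, h32, h21, hw, hxe⟩ := child_hull_mp hsum hx
  exact mem_hull_of hij hik hjk (by linarith) (by linarith) (by linarith) hw hxe

lemma seg_mem_iff {x y z : Pt} :
    z ∈ segment ℝ x y ↔ ∃ a b : ℝ, 0 ≤ a ∧ 0 ≤ b ∧ a + b = 1 ∧ z = a • x + b • y := by
  constructor
  · rintro ⟨a, b, ha, hb, hab, h⟩; exact ⟨a, b, ha, hb, hab, h.symm⟩
  · rintro ⟨a, b, ha, hb, hab, h⟩; exact ⟨a, b, ha, hb, hab, h.symm⟩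

-- B1
lemma inter_B1 {t : Triangle} (ht : t.Nondeg) {i j k : Fin 3}
    (hij : i ≠ j) (hik : i ≠ k) (hjk : j ≠ k)
    (hsum : t.v i + t.v j + t.v k = t.v 0 + t.v 1 + t.v 2) :
    (t.child i j).hull ∩ segment ℝ (t.v i) (t.v j)
      = segment ℝ (t.v i) ((2 : ℝ)⁻¹ • (t.v i + t.v j)) := by
  apply Set.Subset.antisymm
  · rintro x ⟨hx, hseg⟩
    obtain ⟨w1, w2, w3, h3, h32, h21, hw, hxe⟩ := child_hull_mp hsum hx
    rw [seg_mem_iff] at hseg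
    obtain ⟨a, b, ha, hb, hab, hxs⟩ := hseg
    have hxs' : x = a • t.v i + b • t.v j + (0 : ℝ) • t.v k := by
      rw [hxs]; module
    have := uniq ht i j k hij hik hjk (by linarith) (hxe ▸ hxs' ▸ rfl :
      w1 • t.v i + w2 • t.v j + w3 • t.v k = a • t.v i + b • t.v j + (0:ℝ) • t.v k)
    obtain ⟨e1, e2, e3⟩ := this
    rw [seg_mem_iff]
    refine ⟨w1 - w2, 2 * w2, by linarith, by linarith, by linarith, ?_⟩
    rw [hxe, e3]
    module
  · intro x hx
    constructor
    · have h0 : t.v i ∈ (t.child i j).hull := by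
        have := vertex_mem_hull (t.child i j) 0; rwa [child_v0] at this
      have h1 : (2:ℝ)⁻¹ • (t.v i + t.v j) ∈ (t.child i j).hull := by
        have := vertex_mem_hull (t.child i j) 1; rwa [child_v1] at this
      exact (convex_convexHull ℝ _).segment_subset h0 h1 hx
    · have hmid : (2:ℝ)⁻¹ • (t.v i + t.v j) ∈ segment ℝ (t.v i) (t.v j) := by
        rw [seg_mem_iff]
        exact ⟨2⁻¹, 2⁻¹, by norm_num, by norm_num, by norm_num, by module⟩
      exact (convex_segment _ _).segment_subset (left_mem_segment ℝ _ _) hmid hx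

-- B2
lemma inter_B2 {t : Triangle} (ht : t.Nondeg) {i j k : Fin 3}
    (hij : i ≠ j) (hik : i ≠ k) (hjk : j ≠ k)
    (hsum : t.v i + t.v j + t.v k = t.v 0 + t.v 1 + t.v 2) :
    (t.child i j).hull ∩ segment ℝ (t.v i) (t.v k) = {t.v i} := by
  apply Set.Subset.antisymm
  · rintro x ⟨hx, hseg⟩
    obtain ⟨w1, w2, w3, h3, h32, h21, hw, hxe⟩ := child_hull_mp hsum hx
    rw [seg_mem_iff] at hseg
    obtain ⟨a, b, ha, hb, hab, hxs⟩ := hseg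
    have hxs' : x = a • t.v i + (0 : ℝ) • t.v j + b • t.v k := by
      rw [hxs]; module
    obtain ⟨e1, e2, e3⟩ := uniq ht i j k hij hik hjk (by linarith) (hxe ▸ hxs' ▸ rfl :
      w1 • t.v i + w2 • t.v j + w3 • t.v k = a • t.v i + (0:ℝ) • t.v j + b • t.v k)
    have hw3 : w3 = 0 := by linarith
    have hw1 : w1 = 1 := by linarith
    rw [Set.mem_singleton_iff, hxe, e2, hw3, hw1]
    module
  · rintro x rfl
    refine ⟨?_, left_mem_segment ℝ _ _⟩
    have := vertex_mem_hull (t.child i j) 0; rwa [child_v0] at this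

-- B3
lemma inter_B3 {t : Triangle} (ht : t.Nondeg) {i j k : Fin 3}
    (hij : i ≠ j) (hik : i ≠ k) (hjk : j ≠ k)
    (hsum : t.v i + t.v j + t.v k = t.v 0 + t.v 1 + t.v 2) :
    (t.child i j).hull ∩ segment ℝ (t.v j) (t.v k) = ∅ := by
  rw [Set.eq_empty_iff_forall_notMem]
  rintro x ⟨hx, hseg⟩
  obtain ⟨w1, w2, w3, h3, h32, h21, hw, hxe⟩ := child_hull_mp hsum hx
  rw [seg_mem_iff] at hseg
  obtain ⟨a, b, ha, hb, hab, hxs⟩ := hseg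
  have hxs' : x = (0 : ℝ) • t.v i + a • t.v j + b • t.v k := by
    rw [hxs]; module
  obtain ⟨e1, e2, e3⟩ := uniq ht i j k hij hik hjk (by linarith) (hxe ▸ hxs' ▸ rfl :
    w1 • t.v i + w2 • t.v j + w3 • t.v k = (0:ℝ) • t.v i + a • t.v j + b • t.v k)
  linarith

-- a vertex other than `i` is not in the hull of child i j
lemma vertex_notin_child {t : Triangle} (ht : t.Nondeg) {i j k p : Fin 3}
    (hij : i ≠ j) (hik : i ≠ k) (hjk : j ≠ k)
    (hsum : t.v i + t.v j + t.v k = t.v 0 + t.v 1 + t.v 2)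
    (hp : p ≠ i) : t.v p ∉ (t.child i j).hull := by
  intro hx
  obtain ⟨w1, w2, w3, h3, h32, h21, hw, hxe⟩ := child_hull_mp hsum hx
  rcases trich i j k p hij hik hjk with rfl | rfl | rfl
  · exact hp rfl
  · have he : w1 • t.v i + w2 • t.v p + w3 • t.v k
        = (0 : ℝ) • t.v i + (1:ℝ) • t.v p + (0:ℝ) • t.v k := by rw [← hxe]; module
    obtain ⟨e1, e2, e3⟩ := uniq ht i p k hij hik hjk (by linarith) he
    linarith
  · have he : w1 • t.v i + w2 • t.v j + w3 • t.v p
        = (0 : ℝ) • t.v i + (0:ℝ) • t.v j + (1:ℝ) • t.v p := by rw [← hxe]; module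
    obtain ⟨e1, e2, e3⟩ := uniq ht i j p hij hik hjk (by linarith) he
    linarith

lemma mid_ne_vk {t : Triangle} (ht : t.Nondeg) {i j k : Fin 3}
    (hij : i ≠ j) (hik : i ≠ k) (hjk : j ≠ k) :
    (2 : ℝ)⁻¹ • (t.v i + t.v j) ≠ t.v k := by
  intro h
  have h' : (2⁻¹ : ℝ) • t.v i + (2⁻¹:ℝ) • t.v j + (0:ℝ) • t.v k
      = (0:ℝ) • t.v i + (0:ℝ) • t.v j + (1:ℝ) • t.v k := by
    rw [← h]; module
  obtain ⟨e1, e2, e3⟩ := uniq ht i j k hij hik hjk (by norm_num) h'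
  norm_num at e1

lemma bary_ne_v {t : Triangle} (ht : t.Nondeg) (p : Fin 3) : t.bary ≠ t.v p := by
  intro h
  have h01 : (0 : Fin 3) ≠ 1 := by decide
  have h02 : (0 : Fin 3) ≠ 2 := by decide
  have h12 : (1 : Fin 3) ≠ 2 := by decide
  have hb : t.bary = (3⁻¹:ℝ) • t.v 0 + (3⁻¹:ℝ) • t.v 1 + (3⁻¹:ℝ) • t.v 2 := by
    rw [Triangle.bary]; module
  rcases trich 0 1 2 p h01 h02 h12 with rfl | rfl | rfl
  · have h' : (3⁻¹:ℝ) • t.v 0 + (3⁻¹:ℝ) • t.v 1 + (3⁻¹:ℝ) • t.v 2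
        = (1:ℝ) • t.v 0 + (0:ℝ) • t.v 1 + (0:ℝ) • t.v 2 := by rw [← hb, h]; module
    obtain ⟨e1, e2, e3⟩ := uniq ht 0 1 2 h01 h02 h12 (by norm_num) h'
    norm_num at e1
  · have h' : (3⁻¹:ℝ) • t.v 0 + (3⁻¹:ℝ) • t.v 1 + (3⁻¹:ℝ) • t.v 2
        = (0:ℝ) • t.v 0 + (1:ℝ) • t.v 1 + (0:ℝ) • t.v 2 := by rw [← hb, h]; module
    obtain ⟨e1, e2, e3⟩ := uniq ht 0 1 2 h01 h02 h12 (by norm_num) h'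
    norm_num at e1
  · have h' : (3⁻¹:ℝ) • t.v 0 + (3⁻¹:ℝ) • t.v 1 + (3⁻¹:ℝ) • t.v 2
        = (0:ℝ) • t.v 0 + (0:ℝ) • t.v 1 + (1:ℝ) • t.v 2 := by rw [← hb, h]; module
    obtain ⟨e1, e2, e3⟩ := uniq ht 0 1 2 h01 h02 h12 (by norm_num) h'
    norm_num at e1

lemma child_inj {t : Triangle} (ht : t.Nondeg) {i j i' j' : Fin 3}
    (h : t.child i j = t.child i' j') : i = i' ∧ j = j' := by
  have h0 : t.v i = t.v i' := by
    have := congrArg (fun s => Triangle.v s 0) h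
    simpa [child_v0] using this
  have h1 : (2:ℝ)⁻¹ • (t.v i + t.v j) = (2:ℝ)⁻¹ • (t.v i' + t.v j') := by
    have := congrArg (fun s => Triangle.v s 1) h
    simpa [child_v1] using this
  have hi : i = i' := ht.injective h0
  subst hi
  have hj : t.v j = t.v j' := by
    have h2 := smul_right_injective Pt (by norm_num : (2:ℝ)⁻¹ ≠ 0) h1
    exact add_left_cancel h2
  exact ⟨rfl, ht.injective hj⟩

-- chunk 4: thrd, wrappers, labels, transitions
def thrd (i j : Fin 3) : Fin 3 := ⟨(6 - i.val - j.val) % 3, by omega⟩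

lemma thrd1 : ∀ i j : Fin 3, i ≠ j → i ≠ thrd i j := by decide
lemma thrd2 : ∀ i j : Fin 3, i ≠ j → j ≠ thrd i j := by decide

lemma vsum (t : Triangle) (i j : Fin 3) (hij : i ≠ j) :
    t.v i + t.v j + t.v (thrd i j) = t.v 0 + t.v 1 + t.v 2 := by
  rw [← sum3 t.v i j (thrd i j) hij (thrd1 i j hij) (thrd2 i j hij), Fin.sum_univ_three]

lemma sib_disjoint' {t : Triangle} (ht : t.Nondeg) {i j i' j' : Fin 3}
    (hij : i ≠ j) (hij' : i' ≠ j') (hne : i ≠ i' ∨ j ≠ j') :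
    openHull (t.child i j) ∩ openHull (t.child i' j') = ∅ :=
  sib_disjoint ht hij (thrd1 i j hij) (thrd2 i j hij) hij' (thrd1 i' j' hij')
    (thrd2 i' j' hij') (vsum t i j hij) (vsum t i' j' hij') hne

lemma openHull_child_subset' {t : Triangle} {i j : Fin 3} (hij : i ≠ j) :
    openHull (t.child i j) ⊆ openHull t :=
  openHull_child_subset hij (thrd1 i j hij) (thrd2 i j hij) (vsum t i j hij)

lemma hull_child_subset' {t : Triangle} {i j : Fin 3} (hij : i ≠ j) :
    (t.child i j).hull ⊆ t.hull :=
  hull_child_subset hij (thrd1 i j hij) (thrd2 i j hij) (vsum t i j hij)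

lemma child_nondeg' {t : Triangle} (ht : t.Nondeg) {i j : Fin 3} (hij : i ≠ j) :
    (t.child i j).Nondeg :=
  child_nondeg ht hij (thrd1 i j hij) (thrd2 i j hij) (vsum t i j hij)

lemma inter_restrict {α : Type*} {A B C : Set α} (h : A ⊆ B) : A ∩ C = A ∩ (B ∩ C) := by
  ext x
  constructor
  · rintro ⟨ha, hc⟩; exact ⟨ha, h ha, hc⟩
  · rintro ⟨ha, _, hc⟩; exact ⟨ha, hc⟩

lemma mid_mem_segment (x y : Pt) : (2:ℝ)⁻¹ • (x + y) ∈ segment ℝ x y :=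
  ⟨2⁻¹, 2⁻¹, by norm_num, by norm_num, by norm_num, by module⟩

-- labels
def labS (T₀ t : Triangle) : Prop :=
  t.hull ∩ T₀.bdry = segment ℝ (t.v 0) (t.v 1) ∧ segment ℝ (t.v 0) (t.v 1) ⊆ T₀.bdry
def labP (T₀ t : Triangle) : Prop := t.hull ∩ T₀.bdry = {t.v 0}
def labE (T₀ t : Triangle) : Prop := t.hull ∩ T₀.bdry = ∅
def qB (T₀ t : Triangle) : Prop := ∃ i : Fin 3, t.v i = T₀.bary
def qP (T₀ t : Triangle) : Prop := ∃ p : Pt, t.hull ∩ T₀.bdry = {p}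
def qS (T₀ t : Triangle) : Prop := ∃ e ∈ t.sides, e ⊆ T₀.bdry

def TInv (T₀ t : Triangle) : Prop :=
  t.Nondeg ∧ t.hull ⊆ T₀.hull ∧ ((∃ k, t.v k = T₀.bary) ∨ T₀.bary ∉ t.hull) ∧
    (labS T₀ t ∨ labP T₀ t ∨ labE T₀ t)

-- generic transitions
lemma trans_a {t : Triangle} (ht : t.Nondeg) {i j k : Fin 3}
    (hij : i ≠ j) (hik : i ≠ k) (hjk : j ≠ k)
    (hsum : t.v i + t.v j + t.v k = t.v 0 + t.v 1 + t.v 2) {D : Set Pt}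
    (hS : t.hull ∩ D = segment ℝ (t.v i) (t.v j))
    (hsub : segment ℝ (t.v i) (t.v j) ⊆ D) :
    (t.child i j).hull ∩ D = segment ℝ ((t.child i j).v 0) ((t.child i j).v 1) ∧
      segment ℝ ((t.child i j).v 0) ((t.child i j).v 1) ⊆ D := by
  constructor
  · rw [inter_restrict (hull_child_subset hij hik hjk hsum), hS,
      inter_B1 ht hij hik hjk hsum, child_v0, child_v1]
  · rw [child_v0, child_v1]
    intro x hx
    apply hsub
    exact (convex_segment _ _).segment_subset (left_mem_segment ℝ _ _)
      (mid_mem_segment _ _) hx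

lemma trans_b {t : Triangle} (ht : t.Nondeg) {i j k : Fin 3}
    (hij : i ≠ j) (hik : i ≠ k) (hjk : j ≠ k)
    (hsum : t.v i + t.v j + t.v k = t.v 0 + t.v 1 + t.v 2) {D : Set Pt}
    (hS : t.hull ∩ D = segment ℝ (t.v i) (t.v k)) :
    (t.child i j).hull ∩ D = {(t.child i j).v 0} := by
  rw [inter_restrict (hull_child_subset hij hik hjk hsum), hS,
    inter_B2 ht hij hik hjk hsum, child_v0]

lemma trans_c {t : Triangle} (ht : t.Nondeg) {i j k : Fin 3}
    (hij : i ≠ j) (hik : i ≠ k) (hjk : j ≠ k)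
    (hsum : t.v i + t.v j + t.v k = t.v 0 + t.v 1 + t.v 2) {D : Set Pt}
    (hS : t.hull ∩ D = segment ℝ (t.v j) (t.v k)) :
    (t.child i j).hull ∩ D = ∅ := by
  rw [inter_restrict (hull_child_subset hij hik hjk hsum), hS,
    inter_B3 ht hij hik hjk hsum]

lemma trans_p {t : Triangle} {i j : Fin 3} (hij : i ≠ j) {D : Set Pt}
    (hP : t.hull ∩ D = {t.v i}) :
    (t.child i j).hull ∩ D = {(t.child i j).v 0} := by
  rw [inter_restrict (hull_child_subset' hij), hP]
  have hv : t.v i ∈ (t.child i j).hull := by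
    have := vertex_mem_hull (t.child i j) 0; rwa [child_v0] at this
  ext x
  constructor
  · rintro ⟨_, hx⟩; rw [child_v0]; exact hx
  · rintro rfl
    rw [child_v0] at *
    exact ⟨hv, rfl⟩

lemma trans_p' {t : Triangle} (ht : t.Nondeg) {i j p : Fin 3} (hij : i ≠ j)
    (hpi : p ≠ i) {D : Set Pt} (hP : t.hull ∩ D = {t.v p}) :
    (t.child i j).hull ∩ D = ∅ := by
  rw [inter_restrict (hull_child_subset' hij), hP]
  rw [Set.eq_empty_iff_forall_notMem]
  rintro x ⟨hx, rfl⟩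
  exact vertex_notin_child ht hij (thrd1 i j hij) (thrd2 i j hij) (vsum t i j hij) hpi hx

lemma trans_e {t : Triangle} {i j : Fin 3} (hij : i ≠ j) {D : Set Pt}
    (hE : t.hull ∩ D = ∅) : (t.child i j).hull ∩ D = ∅ := by
  rw [inter_restrict (hull_child_subset' hij), hE, Set.inter_empty]

-- label ↔ predicate conversions at a nondegenerate triangle
lemma v_ne {t : Triangle} (ht : t.Nondeg) {i j : Fin 3} (hij : i ≠ j) : t.v i ≠ t.v j :=
  fun h => hij (ht.injective h)

lemma labS_qS {T₀ c : Triangle} (h : labS T₀ c) : qS T₀ c :=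
  ⟨segment ℝ (c.v 0) (c.v 1), ⟨0, 1, by decide, rfl⟩, h.2⟩

lemma labS_not_qP {T₀ c : Triangle} (hc : c.Nondeg) (h : labS T₀ c) : ¬ qP T₀ c := by
  rintro ⟨p, hp⟩
  rw [h.1] at hp
  have h0 : c.v 0 ∈ segment ℝ (c.v 0) (c.v 1) := left_mem_segment ℝ _ _
  have h1 : c.v 1 ∈ segment ℝ (c.v 0) (c.v 1) := right_mem_segment ℝ _ _
  rw [hp] at h0 h1
  exact v_ne hc (by decide : (0:Fin 3) ≠ 1) (h0.trans h1.symm)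

lemma labP_qP {T₀ c : Triangle} (h : labP T₀ c) : qP T₀ c := ⟨c.v 0, h⟩

lemma labP_not_qS {T₀ c : Triangle} (hc : c.Nondeg) (h : labP T₀ c) : ¬ qS T₀ c := by
  rintro ⟨e, ⟨i, j, hij, rfl⟩, hsub⟩
  have hseg : segment ℝ (c.v i) (c.v j) ⊆ c.hull ∩ T₀.bdry := by
    intro x hx
    refine ⟨(convex_convexHull ℝ _).segment_subset (vertex_mem_hull c i) (vertex_mem_hull c j) hx, hsub hx⟩
  rw [h] at hseg
  have h0 := hseg (left_mem_segment ℝ _ _)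
  have h1 := hseg (right_mem_segment ℝ _ _)
  exact v_ne hc hij (h0.trans h1.symm)

lemma labE_not_qP {T₀ c : Triangle} (h : labE T₀ c) : ¬ qP T₀ c := by
  rintro ⟨p, hp⟩
  rw [h] at hp
  exact absurd hp.symm (Set.singleton_ne_empty p)

lemma labE_not_qS {T₀ c : Triangle} (h : labE T₀ c) : ¬ qS T₀ c := by
  rintro ⟨e, ⟨i, j, hij, rfl⟩, hsub⟩
  have : c.v i ∈ c.hull ∩ T₀.bdry :=
    ⟨vertex_mem_hull c i, hsub (left_mem_segment ℝ _ _)⟩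
  rw [h] at this
  exact this

-- chunk 5: kids finset, counting
attribute [local instance] Classical.propDecidable

noncomputable def kids (t : Triangle) : Finset Triangle :=
  {t.child 0 1, t.child 0 2, t.child 1 0, t.child 1 2, t.child 2 0, t.child 2 1}

lemma mem_kids {t c : Triangle} : c ∈ kids t ↔ c = t.child 0 1 ∨ c = t.child 0 2 ∨
    c = t.child 1 0 ∨ c = t.child 1 2 ∨ c = t.child 2 0 ∨ c = t.child 2 1 := by
  simp [kids]

lemma BSub_eq (t : Triangle) : BSub t = ↑(kids t) := by
  ext c
  rw [Finset.mem_coe, mem_kids]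
  constructor
  · rintro ⟨i, j, hij, rfl⟩
    fin_cases i <;> fin_cases j <;> simp_all
  · rintro (rfl | rfl | rfl | rfl | rfl | rfl)
    exacts [⟨0, 1, by decide, rfl⟩, ⟨0, 2, by decide, rfl⟩, ⟨1, 0, by decide, rfl⟩,
      ⟨1, 2, by decide, rfl⟩, ⟨2, 0, by decide, rfl⟩, ⟨2, 1, by decide, rfl⟩]

lemma child_ne {t : Triangle} (ht : t.Nondeg) {i j i' j' : Fin 3}
    (h : ¬(i = i' ∧ j = j')) : t.child i j ≠ t.child i' j' :=
  fun he => h (child_inj ht he)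

lemma kids_card {t : Triangle} (ht : t.Nondeg) : (kids t).card = 6 := by
  rw [kids]
  rw [Finset.card_insert_of_notMem (by
    simp only [Finset.mem_insert, Finset.mem_singleton]
    push_neg
    exact ⟨child_ne ht (by decide), child_ne ht (by decide), child_ne ht (by decide),
      child_ne ht (by decide), child_ne ht (by decide)⟩)]
  rw [Finset.card_insert_of_notMem (by
    simp only [Finset.mem_insert, Finset.mem_singleton]
    push_neg
    exact ⟨child_ne ht (by decide), child_ne ht (by decide), child_ne ht (by decide),
      child_ne ht (by decide)⟩)]
  rw [Finset.card_insert_of_notMem (by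
    simp only [Finset.mem_insert, Finset.mem_singleton]
    push_neg
    exact ⟨child_ne ht (by decide), child_ne ht (by decide), child_ne ht (by decide)⟩)]
  rw [Finset.card_insert_of_notMem (by
    simp only [Finset.mem_insert, Finset.mem_singleton]
    push_neg
    exact ⟨child_ne ht (by decide), child_ne ht (by decide)⟩)]
  rw [Finset.card_insert_of_notMem (by
    simp only [Finset.mem_singleton]
    exact child_ne ht (by decide))]
  rfl

lemma filter_card_two {α : Type*} [DecidableEq α] {q : α → Prop} [DecidablePred q]
    {S : Finset α} {x y : α} (hxy : x ≠ y) (hx : x ∈ S) (hy : y ∈ S)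
    (hq : ∀ z ∈ S, q z ↔ (z = x ∨ z = y)) : (S.filter q).card = 2 := by
  have hfe : S.filter q = {x, y} := by
    ext z
    simp only [Finset.mem_filter, Finset.mem_insert, Finset.mem_singleton]
    constructor
    · rintro ⟨hz, hqz⟩; exact (hq z hz).1 hqz
    · rintro (rfl | rfl)
      exacts [⟨hx, (hq _ hx).2 (Or.inl rfl)⟩, ⟨hy, (hq _ hy).2 (Or.inr rfl)⟩]
  rw [hfe, Finset.card_insert_of_notMem (by simpa using hxy), Finset.card_singleton]

lemma filter_card_zero {α : Type*} {q : α → Prop} [DecidablePred q]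
    {S : Finset α} (hq : ∀ z ∈ S, ¬ q z) : (S.filter q).card = 0 := by
  rw [Finset.filter_false_of_mem hq]; rfl

-- children labels of a labS parent
lemma kidsS {T₀ t : Triangle} (hnd : t.Nondeg) (h : labS T₀ t) :
    labS T₀ (t.child 0 1) ∧ labS T₀ (t.child 1 0) ∧
    labP T₀ (t.child 0 2) ∧ labP T₀ (t.child 1 2) ∧
    labE T₀ (t.child 2 0) ∧ labE T₀ (t.child 2 1) := by
  obtain ⟨hS, hsub⟩ := h
  have hsymm : t.hull ∩ T₀.bdry = segment ℝ (t.v 1) (t.v 0) := by rw [hS, segment_symm]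
  have hsub' : segment ℝ (t.v 1) (t.v 0) ⊆ T₀.bdry := by rw [segment_symm]; exact hsub
  refine ⟨?_, ?_, ?_, ?_, ?_, ?_⟩
  · exact trans_a (k := 2) hnd (by decide) (by decide) (by decide) (by abel) hS hsub
  · exact trans_a (k := 2) hnd (by decide) (by decide) (by decide) (by abel) hsymm hsub'
  · exact trans_b (k := 1) hnd (by decide) (by decide) (by decide) (by abel) hS
  · exact trans_b (k := 0) hnd (by decide) (by decide) (by decide) (by abel) hsymm
  · exact trans_c (k := 1) hnd (by decide) (by decide) (by decide) (by abel) hS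
  · exact trans_c (k := 0) hnd (by decide) (by decide) (by decide) (by abel) hsymm

lemma kidsP {T₀ t : Triangle} (hnd : t.Nondeg) (h : labP T₀ t) :
    labP T₀ (t.child 0 1) ∧ labP T₀ (t.child 0 2) ∧
    labE T₀ (t.child 1 0) ∧ labE T₀ (t.child 1 2) ∧
    labE T₀ (t.child 2 0) ∧ labE T₀ (t.child 2 1) :=
  ⟨trans_p (by decide) h, trans_p (by decide) h,
   trans_p' hnd (by decide) (by decide) h, trans_p' hnd (by decide) (by decide) h,
   trans_p' hnd (by decide) (by decide) h, trans_p' hnd (by decide) (by decide) h⟩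

lemma kidsE {T₀ t : Triangle} (h : labE T₀ t) : ∀ c ∈ kids t, labE T₀ c := by
  intro c hc
  rcases mem_kids.1 hc with rfl | rfl | rfl | rfl | rfl | rfl <;>
    exact trans_e (by decide) h

lemma btype_child {T₀ t : Triangle} (hnd : t.Nondeg) {i j : Fin 3} (hij : i ≠ j)
    (hbt : (∃ k, t.v k = T₀.bary) ∨ T₀.bary ∉ t.hull) :
    (∃ k, (t.child i j).v k = T₀.bary) ∨ T₀.bary ∉ (t.child i j).hull := by
  rcases hbt with ⟨k, hk⟩ | hb
  · by_cases hki : k = i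
    · subst hki; exact Or.inl ⟨0, by rw [child_v0, hk]⟩
    · right; rw [← hk]
      exact vertex_notin_child hnd hij (thrd1 i j hij) (thrd2 i j hij) (vsum t i j hij) hki
  · exact Or.inr fun hmem => hb (hull_child_subset' hij hmem)

lemma kids_TInv {T₀ t : Triangle} (hI : TInv T₀ t) : ∀ c ∈ kids t, TInv T₀ c := by
  obtain ⟨hnd, hsub, hbt, hlab⟩ := hI
  intro c hc
  rcases mem_kids.1 hc with rfl | rfl | rfl | rfl | rfl | rfl <;>
    refine ⟨child_nondeg' hnd (by decide), (hull_child_subset' (by decide)).trans hsub,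
      btype_child hnd (by decide) hbt, ?_⟩
  · rcases hlab with hS | hP | hE
    · exact Or.inl (kidsS hnd hS).1
    · exact Or.inr (Or.inl (kidsP hnd hP).1)
    · exact Or.inr (Or.inr (trans_e (by decide) hE))
  · rcases hlab with hS | hP | hE
    · exact Or.inr (Or.inl (kidsS hnd hS).2.2.1)
    · exact Or.inr (Or.inl (kidsP hnd hP).2.1)
    · exact Or.inr (Or.inr (trans_e (by decide) hE))
  · rcases hlab with hS | hP | hE
    · exact Or.inl (kidsS hnd hS).2.1
    · exact Or.inr (Or.inr (kidsP hnd hP).2.2.1)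
    · exact Or.inr (Or.inr (trans_e (by decide) hE))
  · rcases hlab with hS | hP | hE
    · exact Or.inr (Or.inl (kidsS hnd hS).2.2.2.1)
    · exact Or.inr (Or.inr (kidsP hnd hP).2.2.2.1)
    · exact Or.inr (Or.inr (trans_e (by decide) hE))
  · rcases hlab with hS | hP | hE
    · exact Or.inr (Or.inr (kidsS hnd hS).2.2.2.2.1)
    · exact Or.inr (Or.inr (kidsP hnd hP).2.2.2.2.1)
    · exact Or.inr (Or.inr (trans_e (by decide) hE))
  · rcases hlab with hS | hP | hE
    · exact Or.inr (Or.inr (kidsS hnd hS).2.2.2.2.2)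
    · exact Or.inr (Or.inr (kidsP hnd hP).2.2.2.2.2)
    · exact Or.inr (Or.inr (trans_e (by decide) hE))

lemma count_qB {T₀ t : Triangle} (hI : TInv T₀ t) :
    ((kids t).filter (qB T₀)).card = if qB T₀ t then 2 else 0 := by
  obtain ⟨hnd, hsub, hbt, _⟩ := hI
  rcases hbt with ⟨k, hk⟩ | hb
  · rw [if_pos ⟨k, hk⟩]
    have notq : ∀ i j : Fin 3, i ≠ j → i ≠ k → ¬ qB T₀ (t.child i j) := by
      rintro i j hij hik ⟨l, hl⟩
      have hmem : (t.child i j).v l ∈ (t.child i j).hull := vertex_mem_hull _ l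
      rw [hl, ← hk] at hmem
      exact vertex_notin_child hnd hij (thrd1 i j hij) (thrd2 i j hij) (vsum t i j hij)
        (fun h => hik h.symm) hmem
    have yesq : ∀ j : Fin 3, qB T₀ (t.child k j) := fun j => ⟨0, by rw [child_v0, hk]⟩
    rcases trich 0 1 2 k (by decide) (by decide) (by decide) with rfl | rfl | rfl
    · refine filter_card_two (x := t.child 0 1) (y := t.child 0 2)
        (child_ne hnd (by decide)) (mem_kids.2 (by tauto)) (mem_kids.2 (by tauto)) ?_
      intro z hz
      rcases mem_kids.1 hz with rfl | rfl | rfl | rfl | rfl | rfl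
      · exact ⟨fun _ => Or.inl rfl, fun _ => yesq 1⟩
      · exact ⟨fun _ => Or.inr rfl, fun _ => yesq 2⟩
      · exact ⟨fun hq => (notq 1 0 (by decide) (by decide) hq).elim,
          fun h => (h.elim (child_ne hnd (by decide)) (child_ne hnd (by decide))).elim⟩
      · exact ⟨fun hq => (notq 1 2 (by decide) (by decide) hq).elim,
          fun h => (h.elim (child_ne hnd (by decide)) (child_ne hnd (by decide))).elim⟩
      · exact ⟨fun hq => (notq 2 0 (by decide) (by decide) hq).elim,
          fun h => (h.elim (child_ne hnd (by decide)) (child_ne hnd (by decide))).elim⟩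
      · exact ⟨fun hq => (notq 2 1 (by decide) (by decide) hq).elim,
          fun h => (h.elim (child_ne hnd (by decide)) (child_ne hnd (by decide))).elim⟩
    · refine filter_card_two (x := t.child 1 0) (y := t.child 1 2)
        (child_ne hnd (by decide)) (mem_kids.2 (by tauto)) (mem_kids.2 (by tauto)) ?_
      intro z hz
      rcases mem_kids.1 hz with rfl | rfl | rfl | rfl | rfl | rfl
      · exact ⟨fun hq => (notq 0 1 (by decide) (by decide) hq).elim,
          fun h => (h.elim (child_ne hnd (by decide)) (child_ne hnd (by decide))).elim⟩
      · exact ⟨fun hq => (notq 0 2 (by decide) (by decide) hq).elim,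
          fun h => (h.elim (child_ne hnd (by decide)) (child_ne hnd (by decide))).elim⟩
      · exact ⟨fun _ => Or.inl rfl, fun _ => yesq 0⟩
      · exact ⟨fun _ => Or.inr rfl, fun _ => yesq 2⟩
      · exact ⟨fun hq => (notq 2 0 (by decide) (by decide) hq).elim,
          fun h => (h.elim (child_ne hnd (by decide)) (child_ne hnd (by decide))).elim⟩
      · exact ⟨fun hq => (notq 2 1 (by decide) (by decide) hq).elim,
          fun h => (h.elim (child_ne hnd (by decide)) (child_ne hnd (by decide))).elim⟩
    · refine filter_card_two (x := t.child 2 0) (y := t.child 2 1)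
        (child_ne hnd (by decide)) (mem_kids.2 (by tauto)) (mem_kids.2 (by tauto)) ?_
      intro z hz
      rcases mem_kids.1 hz with rfl | rfl | rfl | rfl | rfl | rfl
      · exact ⟨fun hq => (notq 0 1 (by decide) (by decide) hq).elim,
          fun h => (h.elim (child_ne hnd (by decide)) (child_ne hnd (by decide))).elim⟩
      · exact ⟨fun hq => (notq 0 2 (by decide) (by decide) hq).elim,
          fun h => (h.elim (child_ne hnd (by decide)) (child_ne hnd (by decide))).elim⟩
      · exact ⟨fun hq => (notq 1 0 (by decide) (by decide) hq).elim,
          fun h => (h.elim (child_ne hnd (by decide)) (child_ne hnd (by decide))).elim⟩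
      · exact ⟨fun hq => (notq 1 2 (by decide) (by decide) hq).elim,
          fun h => (h.elim (child_ne hnd (by decide)) (child_ne hnd (by decide))).elim⟩
      · exact ⟨fun _ => Or.inl rfl, fun _ => yesq 0⟩
      · exact ⟨fun _ => Or.inr rfl, fun _ => yesq 1⟩
  · rw [if_neg (fun hq => hq.elim fun i hi => hb (hi ▸ vertex_mem_hull t i))]
    apply filter_card_zero
    rintro z hz ⟨l, hl⟩
    have hmem : z.v l ∈ z.hull := vertex_mem_hull z l
    rw [hl] at hmem
    rcases mem_kids.1 hz with rfl | rfl | rfl | rfl | rfl | rfl <;>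
      exact hb (hull_child_subset' (by decide) hmem)

lemma count_qP {T₀ t : Triangle} (hI : TInv T₀ t) :
    ((kids t).filter (qP T₀)).card
      = if qS T₀ t then 2 else if qP T₀ t then 2 else 0 := by
  obtain ⟨hnd, hsub, _, hlab⟩ := hI
  rcases hlab with hS | hP | hE
  · rw [if_pos (labS_qS hS)]
    obtain ⟨l1, l2, p1, p2, e1, e2⟩ := kidsS hnd hS
    refine filter_card_two (x := t.child 0 2) (y := t.child 1 2)
      (child_ne hnd (by decide)) (mem_kids.2 (by tauto)) (mem_kids.2 (by tauto)) ?_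
    intro z hz
    rcases mem_kids.1 hz with rfl | rfl | rfl | rfl | rfl | rfl
    · exact ⟨fun hq => (labS_not_qP (child_nondeg' hnd (by decide)) l1 hq).elim,
        fun h => (h.elim (child_ne hnd (by decide)) (child_ne hnd (by decide))).elim⟩
    · exact ⟨fun _ => Or.inl rfl, fun _ => labP_qP p1⟩
    · exact ⟨fun hq => (labS_not_qP (child_nondeg' hnd (by decide)) l2 hq).elim,
        fun h => (h.elim (child_ne hnd (by decide)) (child_ne hnd (by decide))).elim⟩
    · exact ⟨fun _ => Or.inr rfl, fun _ => labP_qP p2⟩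
    · exact ⟨fun hq => (labE_not_qP e1 hq).elim,
        fun h => (h.elim (child_ne hnd (by decide)) (child_ne hnd (by decide))).elim⟩
    · exact ⟨fun hq => (labE_not_qP e2 hq).elim,
        fun h => (h.elim (child_ne hnd (by decide)) (child_ne hnd (by decide))).elim⟩
  · rw [if_neg (labP_not_qS hnd hP), if_pos (labP_qP hP)]
    obtain ⟨p1, p2, e1, e2, e3, e4⟩ := kidsP hnd hP
    refine filter_card_two (x := t.child 0 1) (y := t.child 0 2)
      (child_ne hnd (by decide)) (mem_kids.2 (by tauto)) (mem_kids.2 (by tauto)) ?_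
    intro z hz
    rcases mem_kids.1 hz with rfl | rfl | rfl | rfl | rfl | rfl
    · exact ⟨fun _ => Or.inl rfl, fun _ => labP_qP p1⟩
    · exact ⟨fun _ => Or.inr rfl, fun _ => labP_qP p2⟩
    · exact ⟨fun hq => (labE_not_qP e1 hq).elim,
        fun h => (h.elim (child_ne hnd (by decide)) (child_ne hnd (by decide))).elim⟩
    · exact ⟨fun hq => (labE_not_qP e2 hq).elim,
        fun h => (h.elim (child_ne hnd (by decide)) (child_ne hnd (by decide))).elim⟩
    · exact ⟨fun hq => (labE_not_qP e3 hq).elim,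
        fun h => (h.elim (child_ne hnd (by decide)) (child_ne hnd (by decide))).elim⟩
    · exact ⟨fun hq => (labE_not_qP e4 hq).elim,
        fun h => (h.elim (child_ne hnd (by decide)) (child_ne hnd (by decide))).elim⟩
  · rw [if_neg (labE_not_qS hE), if_neg (labE_not_qP hE)]
    exact filter_card_zero fun z hz => labE_not_qP (kidsE hE z hz)

lemma count_qS {T₀ t : Triangle} (hI : TInv T₀ t) :
    ((kids t).filter (qS T₀)).card = if qS T₀ t then 2 else 0 := by
  obtain ⟨hnd, hsub, _, hlab⟩ := hI
  rcases hlab with hS | hP | hE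
  · rw [if_pos (labS_qS hS)]
    obtain ⟨l1, l2, p1, p2, e1, e2⟩ := kidsS hnd hS
    refine filter_card_two (x := t.child 0 1) (y := t.child 1 0)
      (child_ne hnd (by decide)) (mem_kids.2 (by tauto)) (mem_kids.2 (by tauto)) ?_
    intro z hz
    rcases mem_kids.1 hz with rfl | rfl | rfl | rfl | rfl | rfl
    · exact ⟨fun _ => Or.inl rfl, fun _ => labS_qS l1⟩
    · exact ⟨fun hq => (labP_not_qS (child_nondeg' hnd (by decide)) p1 hq).elim,
        fun h => (h.elim (child_ne hnd (by decide)) (child_ne hnd (by decide))).elim⟩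
    · exact ⟨fun _ => Or.inr rfl, fun _ => labS_qS l2⟩
    · exact ⟨fun hq => (labP_not_qS (child_nondeg' hnd (by decide)) p2 hq).elim,
        fun h => (h.elim (child_ne hnd (by decide)) (child_ne hnd (by decide))).elim⟩
    · exact ⟨fun hq => (labE_not_qS e1 hq).elim,
        fun h => (h.elim (child_ne hnd (by decide)) (child_ne hnd (by decide))).elim⟩
    · exact ⟨fun hq => (labE_not_qS e2 hq).elim,
        fun h => (h.elim (child_ne hnd (by decide)) (child_ne hnd (by decide))).elim⟩
  · rw [if_neg (labP_not_qS hnd hP)]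
    obtain ⟨p1, p2, e1, e2, e3, e4⟩ := kidsP hnd hP
    apply filter_card_zero
    intro z hz
    rcases mem_kids.1 hz with rfl | rfl | rfl | rfl | rfl | rfl
    · exact labP_not_qS (child_nondeg' hnd (by decide)) p1
    · exact labP_not_qS (child_nondeg' hnd (by decide)) p2
    · exact labE_not_qS e1
    · exact labE_not_qS e2
    · exact labE_not_qS e3
    · exact labE_not_qS e4
  · rw [if_neg (labE_not_qS hE)]
    exact filter_card_zero fun z hz => labE_not_qS (kidsE hE z hz)

-- chunk 6: base case geometry
lemma child_inter_bdry {t : Triangle} (ht : t.Nondeg) {i j k : Fin 3}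
    (hij : i ≠ j) (hik : i ≠ k) (hjk : j ≠ k)
    (hsum : t.v i + t.v j + t.v k = t.v 0 + t.v 1 + t.v 2) :
    (t.child i j).hull ∩
        (segment ℝ (t.v i) (t.v j) ∪ segment ℝ (t.v i) (t.v k) ∪ segment ℝ (t.v j) (t.v k))
      = segment ℝ ((t.child i j).v 0) ((t.child i j).v 1) := by
  rw [Set.inter_union_distrib_left, Set.inter_union_distrib_left,
    inter_B1 ht hij hik hjk hsum, inter_B2 ht hij hik hjk hsum,
    inter_B3 ht hij hik hjk hsum, Set.union_empty, child_v0, child_v1]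
  rw [Set.union_eq_self_of_subset_right]
  rintro x rfl
  exact left_mem_segment ℝ _ _

set_option maxHeartbeats 1000000 in
lemma base_labS {T₀ : Triangle} (hT₀ : T₀.Nondeg) : ∀ c ∈ kids T₀, labS T₀ c := by
  intro c hc
  rcases mem_kids.1 hc with rfl | rfl | rfl | rfl | rfl | rfl
  · -- (0,1,2)
    have hb : T₀.bdry = segment ℝ (T₀.v 0) (T₀.v 1) ∪ segment ℝ (T₀.v 0) (T₀.v 2)
        ∪ segment ℝ (T₀.v 1) (T₀.v 2) := by
      rw [Triangle.bdry]; ext x; simp only [Set.mem_union]; tauto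
    have hside : segment ℝ (T₀.v 0) (T₀.v 1) ⊆ T₀.bdry := by
      intro x hx; exact Or.inl (Or.inl hx)
    refine ⟨by rw [hb, child_inter_bdry hT₀ (by decide) (by decide) (by decide) (by abel)], ?_⟩
    rw [child_v0, child_v1]
    exact fun x hx => hside ((convex_segment _ _).segment_subset (left_mem_segment ℝ _ _)
      (mid_mem_segment _ _) hx)
  · -- (0,2,1)
    have hb : T₀.bdry = segment ℝ (T₀.v 0) (T₀.v 2) ∪ segment ℝ (T₀.v 0) (T₀.v 1)
        ∪ segment ℝ (T₀.v 2) (T₀.v 1) := by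
      rw [Triangle.bdry, segment_symm ℝ (T₀.v 2) (T₀.v 1)]
      ext x; simp only [Set.mem_union]; tauto
    have hside : segment ℝ (T₀.v 0) (T₀.v 2) ⊆ T₀.bdry := by
      intro x hx; exact Or.inr hx
    refine ⟨by rw [hb, child_inter_bdry hT₀ (by decide) (by decide) (by decide) (by abel)], ?_⟩
    rw [child_v0, child_v1]
    exact fun x hx => hside ((convex_segment _ _).segment_subset (left_mem_segment ℝ _ _)
      (mid_mem_segment _ _) hx)
  · -- (1,0,2)
    have hb : T₀.bdry = segment ℝ (T₀.v 1) (T₀.v 0) ∪ segment ℝ (T₀.v 1) (T₀.v 2)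
        ∪ segment ℝ (T₀.v 0) (T₀.v 2) := by
      rw [Triangle.bdry, segment_symm ℝ (T₀.v 1) (T₀.v 0)]
    have hside : segment ℝ (T₀.v 1) (T₀.v 0) ⊆ T₀.bdry := by
      intro x hx; rw [segment_symm] at hx; exact Or.inl (Or.inl hx)
    refine ⟨by rw [hb, child_inter_bdry hT₀ (by decide) (by decide) (by decide) (by abel)], ?_⟩
    rw [child_v0, child_v1]
    exact fun x hx => hside ((convex_segment _ _).segment_subset (left_mem_segment ℝ _ _)
      (mid_mem_segment _ _) hx)
  · -- (1,2,0)
    have hb : T₀.bdry = segment ℝ (T₀.v 1) (T₀.v 2) ∪ segment ℝ (T₀.v 1) (T₀.v 0)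
        ∪ segment ℝ (T₀.v 2) (T₀.v 0) := by
      rw [Triangle.bdry, segment_symm ℝ (T₀.v 1) (T₀.v 0), segment_symm ℝ (T₀.v 2) (T₀.v 0)]
      ext x; simp only [Set.mem_union]; tauto
    have hside : segment ℝ (T₀.v 1) (T₀.v 2) ⊆ T₀.bdry := by
      intro x hx; exact Or.inl (Or.inr hx)
    refine ⟨by rw [hb, child_inter_bdry hT₀ (by decide) (by decide) (by decide) (by abel)], ?_⟩
    rw [child_v0, child_v1]
    exact fun x hx => hside ((convex_segment _ _).segment_subset (left_mem_segment ℝ _ _)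
      (mid_mem_segment _ _) hx)
  · -- (2,0,1)
    have hb : T₀.bdry = segment ℝ (T₀.v 2) (T₀.v 0) ∪ segment ℝ (T₀.v 2) (T₀.v 1)
        ∪ segment ℝ (T₀.v 0) (T₀.v 1) := by
      rw [Triangle.bdry, segment_symm ℝ (T₀.v 2) (T₀.v 0), segment_symm ℝ (T₀.v 2) (T₀.v 1)]
      ext x; simp only [Set.mem_union]; tauto
    have hside : segment ℝ (T₀.v 2) (T₀.v 0) ⊆ T₀.bdry := by
      intro x hx; rw [segment_symm] at hx; exact Or.inr hx
    refine ⟨by rw [hb, child_inter_bdry hT₀ (by decide) (by decide) (by decide) (by abel)], ?_⟩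
    rw [child_v0, child_v1]
    exact fun x hx => hside ((convex_segment _ _).segment_subset (left_mem_segment ℝ _ _)
      (mid_mem_segment _ _) hx)
  · -- (2,1,0)
    have hb : T₀.bdry = segment ℝ (T₀.v 2) (T₀.v 1) ∪ segment ℝ (T₀.v 2) (T₀.v 0)
        ∪ segment ℝ (T₀.v 1) (T₀.v 0) := by
      rw [Triangle.bdry, segment_symm ℝ (T₀.v 2) (T₀.v 1), segment_symm ℝ (T₀.v 2) (T₀.v 0),
        segment_symm ℝ (T₀.v 1) (T₀.v 0)]
      ext x; simp only [Set.mem_union]; tauto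
    have hside : segment ℝ (T₀.v 2) (T₀.v 1) ⊆ T₀.bdry := by
      intro x hx; rw [segment_symm] at hx; exact Or.inl (Or.inr hx)
    refine ⟨by rw [hb, child_inter_bdry hT₀ (by decide) (by decide) (by decide) (by abel)], ?_⟩
    rw [child_v0, child_v1]
    exact fun x hx => hside ((convex_segment _ _).segment_subset (left_mem_segment ℝ _ _)
      (mid_mem_segment _ _) hx)

lemma base_TInv {T₀ : Triangle} (hT₀ : T₀.Nondeg) : ∀ c ∈ kids T₀, TInv T₀ c := by
  intro c hc
  have hlab := base_labS hT₀ c hc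
  rcases mem_kids.1 hc with rfl | rfl | rfl | rfl | rfl | rfl <;>
    exact ⟨child_nondeg' hT₀ (by decide), hull_child_subset' (by decide),
      Or.inl ⟨2, child_v2 _ _ _⟩, Or.inl hlab⟩

lemma kids_subset_openHull {t c : Triangle} (hc : c ∈ kids t) :
    openHull c ⊆ openHull t := by
  rcases mem_kids.1 hc with rfl | rfl | rfl | rfl | rfl | rfl <;>
    exact openHull_child_subset' (by decide)

lemma kids_pairwise {t : Triangle} (ht : t.Nondeg) :
    ∀ c ∈ kids t, ∀ c' ∈ kids t, c ≠ c' → openHull c ∩ openHull c' = ∅ := by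
  intro c hc c' hc' hne
  rcases mem_kids.1 hc with rfl | rfl | rfl | rfl | rfl | rfl <;>
    rcases mem_kids.1 hc' with rfl | rfl | rfl | rfl | rfl | rfl <;>
    first
      | exact (hne rfl).elim
      | exact sib_disjoint' ht (by decide) (by decide) (by decide)

lemma qSP_excl {T₀ t : Triangle} (hI : TInv T₀ t) : ¬(qS T₀ t ∧ qP T₀ t) := by
  rintro ⟨h1, h2⟩
  rcases hI.2.2.2 with hS | hP | hE
  · exact labS_not_qP hI.1 hS h2
  · exact labP_not_qS hI.1 hP h1
  · exact labE_not_qS hE h1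

lemma sum_ite_const {α : Type*} (F : Finset α) (p : α → Prop) [DecidablePred p] (c : ℕ) :
    (∑ t ∈ F, if p t then c else 0) = c * (F.filter p).card := by
  rw [← Finset.sum_filter, Finset.sum_const, smul_eq_mul, mul_comm]

-- chunk 7: main induction
lemma main_induction {T₀ : Triangle} (hT₀ : T₀.Nondeg) : ∀ n : ℕ, 1 ≤ n →
    ∃ F : Finset Triangle, ↑F = BIter T₀ n ∧ (∀ t ∈ F, TInv T₀ t) ∧
      (∀ s ∈ F, ∀ t ∈ F, s ≠ t → openHull s ∩ openHull t = ∅) ∧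
      (F.filter (qB T₀)).card = 3 * 2 ^ n ∧
      (F.filter (qP T₀)).card = 3 * (n - 1) * 2 ^ n ∧
      (F.filter (qS T₀)).card = 3 * 2 ^ n := by
  intro n
  induction n with
  | zero => omega
  | succ m ih =>
    intro _
    by_cases hm : m = 0
    · subst hm
      refine ⟨kids T₀, ?_, base_TInv hT₀, kids_pairwise hT₀, ?_, ?_, ?_⟩
      · show _ = BIter T₀ 1
        rw [show BIter T₀ 1 = ⋃ t ∈ BIter T₀ 0, BSub t from rfl,
          show BIter T₀ 0 = {T₀} from rfl]
        simp [BSub_eq]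
      · have hall : ∀ z ∈ kids T₀, qB T₀ z := by
          intro z hz
          rcases mem_kids.1 hz with rfl | rfl | rfl | rfl | rfl | rfl <;>
            exact ⟨2, child_v2 _ _ _⟩
        rw [Finset.filter_true_of_mem hall, kids_card hT₀]
        norm_num
      · have hnone : ∀ z ∈ kids T₀, ¬ qP T₀ z := by
          intro z hz
          have hlab := base_labS hT₀ z hz
          rcases mem_kids.1 hz with rfl | rfl | rfl | rfl | rfl | rfl <;>
            exact labS_not_qP (child_nondeg' hT₀ (by decide)) hlab
        rw [filter_card_zero hnone]
        norm_num
      · have hall : ∀ z ∈ kids T₀, qS T₀ z := fun z hz => labS_qS (base_labS hT₀ z hz)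
        rw [Finset.filter_true_of_mem hall, kids_card hT₀]
        norm_num
    · obtain ⟨F, hF, hInv, hdis, hB, hP, hS⟩ := ih (by omega)
      have hkdisj : ∀ t ∈ F, ∀ t' ∈ F, t ≠ t' → Disjoint (kids t) (kids t') := by
        intro t ht t' ht' hne
        rw [Finset.disjoint_left]
        intro c hc hc'
        have hx : c.bary ∈ openHull t ∩ openHull t' :=
          ⟨kids_subset_openHull hc (bary_mem_openHull c),
           kids_subset_openHull hc' (bary_mem_openHull c)⟩
        rw [hdis t ht t' ht' hne] at hx
        exact hx
      have hcount : ∀ (q : Triangle → Prop),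
          ((F.biUnion kids).filter q).card = ∑ t ∈ F, ((kids t).filter q).card := by
        intro q
        rw [Finset.filter_biUnion]
        exact Finset.card_biUnion fun t ht t' ht' hne =>
          Finset.disjoint_filter_filter (hkdisj t ht t' ht' hne)
      refine ⟨F.biUnion kids, ?_, ?_, ?_, ?_, ?_, ?_⟩
      · rw [show BIter T₀ (m + 1) = ⋃ t ∈ BIter T₀ m, BSub t from rfl, ← hF,
          Finset.coe_biUnion]
        ext x
        simp [BSub_eq]
      · intro c hc
        obtain ⟨t, ht, hct⟩ := Finset.mem_biUnion.1 hc
        exact kids_TInv (hInv t ht) c hct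
      · intro c hc c' hc' hne
        obtain ⟨t, ht, hct⟩ := Finset.mem_biUnion.1 hc
        obtain ⟨t', ht', hct'⟩ := Finset.mem_biUnion.1 hc'
        by_cases htt : t = t'
        · subst htt
          exact kids_pairwise (hInv t ht).1 c hct c' hct' hne
        · rw [Set.eq_empty_iff_forall_notMem]
          rintro x ⟨hx, hx'⟩
          have : x ∈ openHull t ∩ openHull t' :=
            ⟨kids_subset_openHull hct hx, kids_subset_openHull hct' hx'⟩
          rw [hdis t ht t' ht' htt] at this
          exact this
      · rw [hcount, Finset.sum_congr rfl (fun t ht => count_qB (hInv t ht)),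
          sum_ite_const, hB, pow_succ]
        ring
      · rw [hcount, Finset.sum_congr rfl (fun t ht => count_qP (hInv t ht))]
        have hsplit : ∀ t ∈ F, (if qS T₀ t then 2 else if qP T₀ t then 2 else 0)
            = (if qS T₀ t then 2 else 0) + (if qP T₀ t then 2 else 0) := by
          intro t ht
          by_cases h1 : qS T₀ t
          · have h2 : ¬ qP T₀ t := fun h2 => qSP_excl (hInv t ht) ⟨h1, h2⟩
            simp [h1, h2]
          · simp [h1]
        rw [Finset.sum_congr rfl hsplit, Finset.sum_add_distrib,
          sum_ite_const, sum_ite_const, hS, hP]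
        obtain ⟨r, rfl⟩ : ∃ r, m = r + 1 := ⟨m - 1, by omega⟩
        simp only [Nat.add_sub_cancel]
        rw [pow_succ, pow_succ]
        ring
      · rw [hcount, Finset.sum_congr rfl (fun t ht => count_qS (hInv t ht)),
          sum_ite_const, hS, pow_succ]
        ring

/-- for `n ≥ 1`: (i) exactly `3·2ⁿ` triangles of `Bⁿ(T₀)` have the
barycenter `b` of `T₀` as a vertex; (ii) exactly `3(n−1)·2ⁿ` triangles of `Bⁿ(T₀)` meet
`∂T₀` in exactly one point; and consequently (iii) exactly `3n·2ⁿ` triangles of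
`Bⁿ(T₀)` either have a side contained in `∂T₀` or meet `∂T₀` in exactly one point. -/
theorem stmt19 (T₀ : Triangle) (hT₀ : T₀.Nondeg) (n : ℕ) (hn : 1 ≤ n) :
    {t ∈ BIter T₀ n | ∃ i : Fin 3, t.v i = T₀.bary}.ncard = 3 * 2 ^ n ∧
    {t ∈ BIter T₀ n | ∃ p : Pt, t.hull ∩ T₀.bdry = {p}}.ncard = 3 * (n - 1) * 2 ^ n ∧
    {t ∈ BIter T₀ n |
        (∃ e ∈ t.sides, e ⊆ T₀.bdry) ∨ ∃ p : Pt, t.hull ∩ T₀.bdry = {p}}.ncard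
      = 3 * n * 2 ^ n := by
  obtain ⟨F, hF, hInv, _, hB, hP, hS⟩ := main_induction hT₀ n hn
  have hset : ∀ (q : Triangle → Prop), {t ∈ BIter T₀ n | q t} = ↑(F.filter q) := by
    intro q
    rw [Finset.coe_filter, ← hF]
    ext t
    simp
  refine ⟨?_, ?_, ?_⟩
  · show {t ∈ BIter T₀ n | qB T₀ t}.ncard = _
    rw [hset (qB T₀), Set.ncard_coe_finset, hB]
  · show {t ∈ BIter T₀ n | qP T₀ t}.ncard = _
    rw [hset (qP T₀), Set.ncard_coe_finset, hP]
  · show {t ∈ BIter T₀ n | qS T₀ t ∨ qP T₀ t}.ncard = _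
    have hdisj : Disjoint (F.filter (qS T₀)) (F.filter (qP T₀)) := by
      rw [Finset.disjoint_left]
      intro t h1 h2
      rw [Finset.mem_filter] at h1 h2
      exact qSP_excl (hInv t h1.1) ⟨h1.2, h2.2⟩
    have hu : {t ∈ BIter T₀ n | qS T₀ t ∨ qP T₀ t}
        = ↑(F.filter (qS T₀)) ∪ ↑(F.filter (qP T₀)) := by
      rw [← hF]
      ext t
      simp only [Set.mem_setOf_eq, Finset.coe_filter, Set.mem_union, Finset.mem_coe]
      tauto
    rw [hu, Set.ncard_union_eq (Finset.disjoint_coe.2 hdisj)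
      (F.filter _).finite_toSet (F.filter _).finite_toSet,
      Set.ncard_coe_finset, Set.ncard_coe_finset, hS, hP]
    obtain ⟨r, rfl⟩ : ∃ r, n = r + 1 := ⟨n - 1, by omega⟩
    simp only [Nat.add_sub_cancel]
    ring
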